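/- Let W ∈ Gr₂(n,k), let x' ∈ 𝔽₂ⁿ, and let CS(W^⊥) be a set of coset representatives of W^⊥ in 𝔽₂ⁿ. Then ∑_{z' ∈ CS(W^⊥)} |W_{x',z'}⟩⟨W_{x',z'}| = ∑_{w ∈ x'+W} |w⟩⟨w|, i.e. this sum equals the orthogonal projection onto the span of the computational basis vectors indexed by the coset x'+W. -/

import Mathlib

open scoped Classical

/-- The coset state `|W_{x,z}⟩ = 2^{-k/2} ∑_{u ∈ W} (-1)^{z·u} |x+u⟩` in `(ℂ²)^{⊗n}`,
identified with `EuclideanSpace ℂ (Fin n → ZMod 2)` via the computational basis. -/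
noncomputable def cosetState {n : ℕ} (W : Submodule (ZMod 2) (Fin n → ZMod 2))
    (x z : Fin n → ZMod 2) : EuclideanSpace ℂ (Fin n → ZMod 2) :=
  (((Real.sqrt 2 : ℝ) : ℂ) ^ (Module.finrank (ZMod 2) W))⁻¹ •
    ∑ u : W, ((-1 : ℂ) ^ (dotProduct z (u : Fin n → ZMod 2)).val) •
      EuclideanSpace.single (x + (u : Fin n → ZMod 2)) (1 : ℂ)

/-- The dual space `W^⊥ = {y ∈ 𝔽₂ⁿ : x·y = 0 for all x ∈ W}` with respect to the standard
bilinear form `x·y = ∑ᵢ xᵢyᵢ`. -/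
def dualSpace {n : ℕ} (W : Submodule (ZMod 2) (Fin n → ZMod 2)) :
    Submodule (ZMod 2) (Fin n → ZMod 2) where
  carrier := {y | ∀ x ∈ W, dotProduct x y = 0}
  add_mem' := by
    intro a b ha hb x hx
    simp [dotProduct_add, ha x hx, hb x hx]
  zero_mem' := by
    intro x hx
    simp
  smul_mem' := by
    intro c a ha x hx
    simp [dotProduct_smul, ha x hx]

/-- `T` is a set of coset representatives of the subspace `W` in `𝔽₂ⁿ`: it contains exactly
one vector from each coset of `W`. -/
def IsCosetReps {n : ℕ} (W : Submodule (ZMod 2) (Fin n → ZMod 2))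
    (T : Set (Fin n → ZMod 2)) : Prop :=
  ∀ v : Fin n → ZMod 2, ∃! x, x ∈ T ∧ v - x ∈ W

/-- The rank-one operator `|ψ⟩⟨φ|`. -/
noncomputable def outer {ι : Type*} [Fintype ι] [DecidableEq ι]
    (ψ φ : EuclideanSpace ℂ ι) : EuclideanSpace ℂ ι →L[ℂ] EuclideanSpace ℂ ι :=
  (innerSL ℂ φ).smulRight ψ

/-! ### Auxiliary lemmas -/

section Aux
variable {n : ℕ}

lemma zmod2_pi_neg (v : Fin n → ZMod 2) : -v = v := by
  funext j; exact CharTwo.neg_eq (v j)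

lemma zmod2_pi_add_self (v : Fin n → ZMod 2) : v + v = 0 := by
  funext j; exact CharTwo.add_self_eq_zero (v j)

lemma neg_one_pow_val_add (p q : ZMod 2) :
    ((-1 : ℂ)) ^ (p + q).val = (-1 : ℂ) ^ p.val * (-1 : ℂ) ^ q.val := by
  have h : ∀ m : ZMod 2, m = 0 ∨ m = 1 := by decide
  rcases h p with rfl | rfl <;> rcases h q with rfl | rfl <;>
    simp [show ZMod.val ((1:ZMod 2)+1) = 0 from rfl, show ZMod.val (1:ZMod 2) = 1 from rfl,
      show ZMod.val (0:ZMod 2) = 0 from rfl, show ZMod.val ((0:ZMod 2)+0) = 0 from rfl,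
      show ZMod.val ((0:ZMod 2)+1) = 1 from rfl, show ZMod.val ((1:ZMod 2)+0) = 1 from rfl]

noncomputable def dotLin (n : ℕ) :
    (Fin n → ZMod 2) →ₗ[ZMod 2] Module.Dual (ZMod 2) (Fin n → ZMod 2) where
  toFun v := { toFun := fun x => dotProduct x v
               map_add' := fun a b => add_dotProduct a b v
               map_smul' := fun c a => smul_dotProduct c a v }
  map_add' := by intro a b; ext x; simp [dotProduct_add]
  map_smul' := by intro c a; ext x; simp [dotProduct_smul]

lemma dotLin_surj (n : ℕ) : Function.Surjective (dotLin n) := by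
  have hinj : Function.Injective (dotLin n) := by
    rw [injective_iff_map_eq_zero]
    intro v hv
    funext i
    have := congrFun (congrArg (fun f => f.toFun) hv) (Pi.single i 1)
    simpa [dotLin, single_dotProduct] using this
  have h : Module.finrank (ZMod 2) (Fin n → ZMod 2) =
      Module.finrank (ZMod 2) (Module.Dual (ZMod 2) (Fin n → ZMod 2)) := by
    simp [Subspace.dual_finrank_eq]
  exact (LinearMap.injective_iff_surjective_of_finrank_eq_finrank h).mp hinj

lemma finrank_dualSpace (W : Submodule (ZMod 2) (Fin n → ZMod 2)) :
    Module.finrank (ZMod 2) (dualSpace W) = n - Module.finrank (ZMod 2) W := by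
  set Φ : (Fin n → ZMod 2) →ₗ[ZMod 2] Module.Dual (ZMod 2) W :=
    (W.subtype.dualMap).comp (dotLin n) with hΦ
  have hsurj : Function.Surjective Φ :=
    (LinearMap.dualMap_surjective_of_injective W.injective_subtype).comp (dotLin_surj n)
  have hker : LinearMap.ker Φ = dualSpace W := by
    ext v
    constructor
    · intro hv x hx
      have := congrFun (congrArg (fun f : Module.Dual (ZMod 2) W => f.toFun) hv) ⟨x, hx⟩
      simpa [hΦ, dotLin, LinearMap.dualMap, Module.Dual.transpose_apply] using this
    · intro hv
      have : Φ v = 0 := by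
        ext w
        simpa [hΦ, dotLin, LinearMap.dualMap, Module.Dual.transpose_apply] using hv (w : Fin n → ZMod 2) w.2
      simpa [LinearMap.mem_ker] using this
  have h1 := LinearMap.finrank_range_add_finrank_ker Φ
  rw [LinearMap.range_eq_top.mpr hsurj, hker] at h1
  have h2 : Module.finrank (ZMod 2) (⊤ : Submodule (ZMod 2) (Module.Dual (ZMod 2) W)) =
      Module.finrank (ZMod 2) W := by
    rw [finrank_top, Subspace.dual_finrank_eq]
  have h3 : Module.finrank (ZMod 2) (Fin n → ZMod 2) = n := Module.finrank_fin_fun (ZMod 2)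
  have h4 : Module.finrank (ZMod 2) W ≤ n := by
    have := W.finrank_le
    omega
  omega

lemma card_cosetReps (A : Submodule (ZMod 2) (Fin n → ZMod 2)) (T : Set (Fin n → ZMod 2))
    (hT : IsCosetReps A T) :
    Fintype.card T * Fintype.card A = 2 ^ n := by
  have hbij : Function.Bijective
      (fun p : T × A => (p.1 : Fin n → ZMod 2) + (p.2 : Fin n → ZMod 2)) := by
    constructor
    · rintro ⟨t, a⟩ ⟨t', a'⟩ h
      simp only at h
      have ht1 : (t : Fin n → ZMod 2) ∈ T ∧ ((t : Fin n → ZMod 2) + a) - t ∈ A := by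
        simpa using ⟨t.2, a.2⟩
      have ht2 : (t' : Fin n → ZMod 2) ∈ T ∧ ((t : Fin n → ZMod 2) + a) - t' ∈ A := by
        rw [h]; simpa using ⟨t'.2, a'.2⟩
      have htt : (t : Fin n → ZMod 2) = t' :=
        ((hT ((t : Fin n → ZMod 2) + a)).unique ht1 ht2)
      have haa : (a : Fin n → ZMod 2) = a' := by
        have h' := h; rw [htt] at h'; exact add_left_cancel h'
      exact Prod.ext (Subtype.ext htt) (Subtype.ext haa)
    · intro v
      obtain ⟨t, ⟨ht, hv⟩, -⟩ := hT v
      exact ⟨(⟨t, ht⟩, ⟨v - t, hv⟩), by simp⟩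
  calc Fintype.card T * Fintype.card A = Fintype.card (T × A) := (Fintype.card_prod _ _).symm
    _ = Fintype.card (Fin n → ZMod 2) := Fintype.card_of_bijective hbij
    _ = 2 ^ n := by simp

lemma char_sum (W : Submodule (ZMod 2) (Fin n → ZMod 2)) (T' : Set (Fin n → ZMod 2))
    (hT' : IsCosetReps (dualSpace W) T') {w : Fin n → ZMod 2} (hw : w ∈ W) (hw0 : w ≠ 0) :
    ∑ z' : T', ((-1 : ℂ) ^ (dotProduct (z' : Fin n → ZMod 2) w).val) = 0 := by
  obtain ⟨i, hi⟩ : ∃ i, w i ≠ 0 := by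
    by_contra h
    push_neg at h
    exact hw0 (funext h)
  have hwi : w i = 1 := by
    have : ∀ m : ZMod 2, m ≠ 0 → m = 1 := by decide
    exact this _ hi
  set z₀ : Fin n → ZMod 2 := Pi.single i 1 with hz₀def
  have hz₀ : dotProduct z₀ w = 1 := by
    simp [hz₀def, single_dotProduct, hwi]
  set σ : T' → T' := fun t =>
    ⟨(hT' ((t : Fin n → ZMod 2) + z₀)).choose,
     (hT' ((t : Fin n → ZMod 2) + z₀)).choose_spec.1.1⟩ with hσdef
  have hσmem : ∀ t : T', ((t : Fin n → ZMod 2) + z₀) - (σ t : Fin n → ZMod 2) ∈ dualSpace W :=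
    fun t => (hT' ((t : Fin n → ZMod 2) + z₀)).choose_spec.1.2
  have hdot : ∀ t : T', dotProduct ((σ t : Fin n → ZMod 2)) w =
      dotProduct (t : Fin n → ZMod 2) w + 1 := by
    intro t
    have h0 : dotProduct w (((t : Fin n → ZMod 2) + z₀) - (σ t : Fin n → ZMod 2)) = 0 :=
      (hσmem t) w hw
    rw [dotProduct_comm] at h0
    rw [sub_dotProduct, add_dotProduct, hz₀, sub_eq_zero] at h0
    rw [h0.symm]
  have hinv : Function.Involutive σ := by
    intro t
    have h1 : ((σ t : Fin n → ZMod 2) + z₀) - (t : Fin n → ZMod 2) ∈ dualSpace W := by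
      have hd := hσmem t
      have heq : ((σ t : Fin n → ZMod 2) + z₀) - (t : Fin n → ZMod 2) =
          ((t : Fin n → ZMod 2) + z₀) - (σ t : Fin n → ZMod 2) := by
        rw [sub_eq_add_neg, sub_eq_add_neg, zmod2_pi_neg, zmod2_pi_neg]
        abel
      rw [heq]
      exact hd
    exact Subtype.ext ((hT' ((σ t : Fin n → ZMod 2) + z₀)).unique
      ((hT' ((σ t : Fin n → ZMod 2) + z₀)).choose_spec.1) ⟨t.2, h1⟩)
  have hflip : ∀ t : T', ((-1 : ℂ) ^ (dotProduct ((σ t : Fin n → ZMod 2)) w).val) =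
      -((-1 : ℂ) ^ (dotProduct (t : Fin n → ZMod 2) w).val) := by
    intro t
    rw [hdot t]
    have h : ∀ m : ZMod 2, m = 0 ∨ m = 1 := by decide
    rcases h (dotProduct (t : Fin n → ZMod 2) w) with hm | hm <;> rw [hm] <;>
      simp [show ZMod.val ((0:ZMod 2)+1) = 1 from rfl, show ZMod.val ((1:ZMod 2)+1) = 0 from rfl,
        show ZMod.val (0:ZMod 2) = 0 from rfl, show ZMod.val (1:ZMod 2) = 1 from rfl]
  have hS : (∑ z' : T', ((-1 : ℂ) ^ (dotProduct (z' : Fin n → ZMod 2) w).val)) =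
      -∑ z' : T', ((-1 : ℂ) ^ (dotProduct (z' : Fin n → ZMod 2) w).val) := by
    conv_lhs => rw [← Equiv.sum_comp hinv.toPerm
      (fun z' : T' => ((-1 : ℂ) ^ (dotProduct (z' : Fin n → ZMod 2) w).val))]
    rw [← Finset.sum_neg_distrib]
    exact Finset.sum_congr rfl fun t _ => hflip t
  linear_combination hS / 2

lemma cosetState_apply (W : Submodule (ZMod 2) (Fin n → ZMod 2))
    (x z a : Fin n → ZMod 2) :
    cosetState W x z a =
      if a - x ∈ W then
        (((Real.sqrt 2 : ℝ) : ℂ) ^ (Module.finrank (ZMod 2) W))⁻¹ *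
          (-1 : ℂ) ^ (dotProduct z (a - x)).val
      else 0 := by
  unfold cosetState
  have hsum : (∑ u : W, ((-1 : ℂ) ^ (dotProduct z (u : Fin n → ZMod 2)).val) •
      EuclideanSpace.single (x + (u : Fin n → ZMod 2)) (1 : ℂ)) a =
      ∑ u : W, ((-1 : ℂ) ^ (dotProduct z (u : Fin n → ZMod 2)).val) *
        (if a = x + (u : Fin n → ZMod 2) then (1:ℂ) else 0) := by
    rw [WithLp.ofLp_sum, Finset.sum_apply]
    refine Finset.sum_congr rfl fun u _ => ?_
    simp [EuclideanSpace.single_apply, eq_comm]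
  have happ : (((((Real.sqrt 2 : ℝ) : ℂ) ^ (Module.finrank (ZMod 2) W))⁻¹ : ℂ) •
      (∑ u : W, ((-1 : ℂ) ^ (dotProduct z (u : Fin n → ZMod 2)).val) •
      EuclideanSpace.single (x + (u : Fin n → ZMod 2)) (1 : ℂ))) a =
      ((((Real.sqrt 2 : ℝ) : ℂ) ^ (Module.finrank (ZMod 2) W))⁻¹ : ℂ) *
      (∑ u : W, ((-1 : ℂ) ^ (dotProduct z (u : Fin n → ZMod 2)).val) •
      EuclideanSpace.single (x + (u : Fin n → ZMod 2)) (1 : ℂ)) a := rfl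
  rw [happ, hsum]
  by_cases h : a - x ∈ W
  · rw [if_pos h, Finset.sum_eq_single (⟨a - x, h⟩ : W)]
    · simp
    · intro b _ hb
      have hne : ¬ (a = x + (b : Fin n → ZMod 2)) := by
        intro hEq
        apply hb
        apply Subtype.ext
        simp [hEq]
      simp [hne]
    · simp
  · rw [if_neg h]
    rw [Finset.sum_eq_zero, mul_zero]
    intro u _
    have hne : ¬ (a = x + (u : Fin n → ZMod 2)) := by
      intro hEq
      exact h (by simp [hEq, u.2])
    simp [hne]

end Aux

/-- For `W ∈ Gr₂(n,k)`, `x' ∈ 𝔽₂ⁿ` and a set `CS(W^⊥)` of coset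
representatives of `W^⊥`, we have
`∑_{z' ∈ CS(W^⊥)} |W_{x',z'}⟩⟨W_{x',z'}| = ∑_{w ∈ x' + W} |w⟩⟨w|`,
the orthogonal projection onto the span of the computational basis vectors of `x' + W`. -/
theorem sum_outer_cosetState_eq_proj {n k : ℕ} (W : Submodule (ZMod 2) (Fin n → ZMod 2))
    (hW : Module.finrank (ZMod 2) W = k) (x' : Fin n → ZMod 2)
    (T' : Set (Fin n → ZMod 2)) (hT' : IsCosetReps (dualSpace W) T') :
    ∑ z' : T', outer (cosetState W x' (z' : Fin n → ZMod 2))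
        (cosetState W x' (z' : Fin n → ZMod 2)) =
      ∑ w : {w : Fin n → ZMod 2 // w - x' ∈ W},
        outer (EuclideanSpace.single (w : Fin n → ZMod 2) (1 : ℂ))
          (EuclideanSpace.single (w : Fin n → ZMod 2) (1 : ℂ)) := by
  have hn : Module.finrank (ZMod 2) (Fin n → ZMod 2) = n := Module.finrank_fin_fun (ZMod 2)
  have hkn : k ≤ n := by
    have := W.finrank_le
    omega
  have hcardA : Fintype.card (dualSpace W) = 2 ^ (n - k) := by
    rw [Module.card_eq_pow_finrank (K := ZMod 2), finrank_dualSpace, hW, ZMod.card]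
  have hcardT : Fintype.card T' = 2 ^ k := by
    have h := card_cosetReps (dualSpace W) T' hT'
    rw [hcardA] at h
    have h2 : (2:ℕ) ^ k * 2 ^ (n - k) = 2 ^ n := by
      rw [← pow_add]
      congr 1
      omega
    have hpos : 0 < (2:ℕ) ^ (n - k) := Nat.pow_pos (by norm_num)
    exact Nat.eq_of_mul_eq_mul_right hpos (by rw [h, ← h2])
  -- scalar facts
  have hc2 : ((((Real.sqrt 2 : ℝ) : ℂ)) ^ k)⁻¹ * ((((Real.sqrt 2 : ℝ) : ℂ)) ^ k)⁻¹ =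
      ((2 : ℂ) ^ k)⁻¹ := by
    rw [← mul_inv, ← mul_pow, ← Complex.ofReal_mul, Real.mul_self_sqrt (by norm_num)]
    norm_num
  -- reduce to matrix entries
  have hb : ∀ b : Fin n → ZMod 2,
      (∑ z' : T', outer (cosetState W x' (z' : Fin n → ZMod 2))
        (cosetState W x' (z' : Fin n → ZMod 2))) (EuclideanSpace.single b 1) =
      (∑ w : {w : Fin n → ZMod 2 // w - x' ∈ W},
        outer (EuclideanSpace.single (w : Fin n → ZMod 2) (1 : ℂ))
          (EuclideanSpace.single (w : Fin n → ZMod 2) (1 : ℂ))) (EuclideanSpace.single b 1) := by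
    intro b
    rw [ContinuousLinearMap.sum_apply, ContinuousLinearMap.sum_apply]
    ext a
    rw [WithLp.ofLp_sum, WithLp.ofLp_sum, Finset.sum_apply, Finset.sum_apply]
    have houter : ∀ (ψ φ : EuclideanSpace ℂ (Fin n → ZMod 2)),
        outer ψ φ (EuclideanSpace.single b 1) a =
          (starRingEnd ℂ) (φ b) * ψ a := by
      intro ψ φ
      have : outer ψ φ (EuclideanSpace.single b 1) a
          = (inner ℂ φ (EuclideanSpace.single b (1:ℂ)) : ℂ) * ψ a := rfl
      rw [this, EuclideanSpace.inner_single_right, one_mul]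
    simp only [houter]
    by_cases hbW : b - x' ∈ W
    · by_cases haW : a - x' ∈ W
      · -- both in the coset
        have hterm : ∀ z : Fin n → ZMod 2,
            (starRingEnd ℂ) (cosetState W x' z b) * cosetState W x' z a =
            ((2 : ℂ) ^ k)⁻¹ *
              (-1 : ℂ) ^ (dotProduct z ((a - x') + (b - x'))).val := by
          intro z
          rw [cosetState_apply, cosetState_apply, if_pos hbW, if_pos haW, hW]
          rw [map_mul, map_inv₀, map_pow, Complex.conj_ofReal, map_pow, map_neg, map_one]
          rw [dotProduct_add, neg_one_pow_val_add, ← hc2]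
          ring
        simp only [hterm]
        rw [← Finset.mul_sum]
        by_cases hab : a = b
        · subst hab
          have hZero : (a - x') + (a - x') = 0 := zmod2_pi_add_self _
          rw [hZero]
          have hone : ∀ z' : T',
              ((-1 : ℂ) ^ (dotProduct (z' : Fin n → ZMod 2) (0 : Fin n → ZMod 2)).val)
                = 1 := by
            intro z'
            simp [dotProduct_zero, show ZMod.val (0 : ZMod 2) = 0 from rfl]
          simp only [hone]
          rw [Finset.sum_const, Finset.card_univ, hcardT]
          -- RHS
          rw [Finset.sum_eq_single (⟨a, hbW⟩ : {w : Fin n → ZMod 2 // w - x' ∈ W})]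
          · simp [EuclideanSpace.single_apply]
          · intro w _ hw
            have : ¬ (a = (w : Fin n → ZMod 2)) := by
              intro hEq
              exact hw (Subtype.ext hEq.symm)
            simp [EuclideanSpace.single_apply, this]
          · simp
        · -- a ≠ b : character sum vanishes
          have hwmem : (a - x') + (b - x') ∈ W := W.add_mem haW hbW
          have hwne : (a - x') + (b - x') ≠ 0 := by
            intro h0
            apply hab
            have : a - x' = -(b - x') := eq_neg_of_add_eq_zero_left h0
            rw [zmod2_pi_neg] at this
            have := congrArg (fun v => v + x') this
            simpa using this
          rw [char_sum W T' hT' hwmem hwne, mul_zero]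
          -- RHS is zero
          rw [Finset.sum_eq_zero]
          intro w _
          by_cases hwa : a = (w : Fin n → ZMod 2)
          · have : ¬ (b = (w : Fin n → ZMod 2)) := fun hEq => hab (hwa.trans hEq.symm)
            simp [EuclideanSpace.single_apply, this]
          · simp [EuclideanSpace.single_apply, hwa]
      · -- a not in coset: both sides vanish
        rw [Finset.sum_eq_zero, Finset.sum_eq_zero]
        · intro w _
          have : ¬ (a = (w : Fin n → ZMod 2)) := by
            intro hEq
            exact haW (hEq ▸ w.2)
          simp [EuclideanSpace.single_apply, this]
        · intro z _
          rw [cosetState_apply (a := a), if_neg haW, mul_zero]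
    · -- b not in coset: both sides vanish
      rw [Finset.sum_eq_zero, Finset.sum_eq_zero]
      · intro w _
        have : ¬ (b = (w : Fin n → ZMod 2)) := by
          intro hEq
          exact hbW (hEq ▸ w.2)
        simp [EuclideanSpace.single_apply, this]
      · intro z _
        rw [cosetState_apply (a := b), if_neg hbW, map_zero, zero_mul]
  -- conclude by linearity
  apply ContinuousLinearMap.coe_injective
  apply Module.Basis.ext (EuclideanSpace.basisFun (Fin n → ZMod 2) ℂ).toBasis
  intro b
  have hbasis : (EuclideanSpace.basisFun (Fin n → ZMod 2) ℂ).toBasis b =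
      EuclideanSpace.single b 1 := by
    simp [EuclideanSpace.basisFun_apply]
  rw [hbasis]
  exact hb b
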